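/- Let ε be a real number with 0 ≤ ε < 1/3 and let q, p_v, p_w ∈ [0, 1]. Suppose the ε-well-supported conditions hold: if p_v > 0 then q ≥ (1/3)(1 − q) − ε; if p_v < 1 then (1/3)(1 − q) ≥ q − ε; if p_w > 0 then (1/3)q ≥ (1 − q) − ε; if p_w < 1 then (1 − q) ≥ (1/3)q − ε. Then: (1) if q = 0 then p_v = 0 and p_w = 0; (2) if q = 1 then p_v = 1 and p_w = 1; and (3) in all cases p_v ∈ {0, 1} or p_w ∈ {0, 1}. Specifically, if q ≤ 1/2 then p_w = 0, and if q ≥ 1/2 then p_v = 1. -/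
import Mathlib

/-- Correctness of the PURIFY-gate gadget in the polymatrix-game reduction
for ε-well-supported Nash equilibria, for every `ε < 1/3`. Here `q` is the
probability that the input player plays 'one', and `p_v, p_w` are the
probabilities that the output players play 'one'. -/
theorem polymatrix_wsne_purify_gadget (ε q pv pw : ℝ)
    (hε0 : 0 ≤ ε) (hε1 : ε < 1 / 3)
    (hq : q ∈ Set.Icc (0:ℝ) 1)
    (hpv : pv ∈ Set.Icc (0:ℝ) 1) (hpw : pw ∈ Set.Icc (0:ℝ) 1)
    (h1 : 0 < pv → (1 / 3) * (1 - q) - ε ≤ q)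
    (h2 : pv < 1 → q - ε ≤ (1 / 3) * (1 - q))
    (h3 : 0 < pw → (1 - q) - ε ≤ (1 / 3) * q)
    (h4 : pw < 1 → (1 / 3) * q - ε ≤ 1 - q) :
    (q = 0 → pv = 0 ∧ pw = 0) ∧
    (q = 1 → pv = 1 ∧ pw = 1) ∧
    ((pv = 0 ∨ pv = 1) ∨ (pw = 0 ∨ pw = 1)) ∧
    (q ≤ 1 / 2 → pw = 0) ∧
    (1 / 2 ≤ q → pv = 1) := by
  obtain ⟨hq0, hq1⟩ := hq
  obtain ⟨hpv0, hpv1⟩ := hpv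
  obtain ⟨hpw0, hpw1⟩ := hpw
  have hw0 : q ≤ 1 / 2 → pw = 0 := by
    intro hhalf
    by_contra h
    have hp : 0 < pw := lt_of_le_of_ne hpw0 (Ne.symm h)
    have := h3 hp
    linarith
  have hv1 : 1 / 2 ≤ q → pv = 1 := by
    intro hhalf
    by_contra h
    have hp : pv < 1 := lt_of_le_of_ne hpv1 h
    have := h2 hp
    linarith
  refine ⟨?_, ?_, ?_, hw0, hv1⟩
  · intro h0
    subst h0
    constructor
    · by_contra h
      have hp : 0 < pv := lt_of_le_of_ne hpv0 (Ne.symm h)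
      have := h1 hp
      linarith
    · exact hw0 (by norm_num)
  · intro h0
    subst h0
    refine ⟨hv1 (by norm_num), ?_⟩
    by_contra h
    have hp : pw < 1 := lt_of_le_of_ne hpw1 h
    have := h4 hp
    linarith
  · rcases le_or_gt q (1/2) with h | h
    · exact Or.inr (Or.inl (hw0 h))
    · exact Or.inl (Or.inr (hv1 h.le))
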